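/- arXiv:1704.04956 — 2 statements merged into one kernel-verified Lean document; each statement's English description precedes it below -/
import Mathlib

section
/- Let G be a cyclic graph, let v and u be vertices of G, and let m be a nonnegative integer. Then |γ_m(v) − γ_m(u)| < 1. -/
open Filter Topology Metric

noncomputable section

/-! ### The circle of unit circumference, clockwise distance and cyclic order -/

/-- The circle `S¹` of unit circumference, `ℝ/ℤ`. -/
abbrev Circ : Type := AddCircle (1 : ℝ)

instance : Fact ((0:ℝ) < 1) := ⟨one_pos⟩

/-- The clockwise distance from `u` to `v`: the representative of `v - u` in `[0,1)`. -/
def darc (u v : Circ) : ℝ := ((AddCircle.equivIco 1 0) (v - u) : ℝ)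

/-- `csbtw u v w`: the three points are distinct and `v` lies strictly inside the
clockwise arc from `u` to `w`; that is, `u ≺ v ≺ w ≺ u`. -/
def csbtw (u v w : Circ) : Prop := u ≠ v ∧ v ≠ w ∧ w ≠ u ∧ darc u v < darc u w

/-- `cwbtw u v w`: the weak clockwise cyclic order `u ⪯ v ⪯ w ⪯ u`. -/
def cwbtw (u v w : Circ) : Prop := darc u v ≤ darc u w

/-! ### Cyclic graphs, winding fractions, clique complexes -/

/-- A (possibly infinite) cyclic graph: a directed graph whose vertices lie on the
circle `S¹` of unit circumference, with no self-loops and no doubly oriented edges,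
such that whenever `v → u` is an edge and `v ≺ w ≺ u ≺ v` for a vertex `w`,
also `v → w` and `w → u` are edges. -/
structure CyclicGraph where
  V : Set Circ
  Adj : Circ → Circ → Prop
  mem_of_adj : ∀ {v w}, Adj v w → v ∈ V ∧ w ∈ V
  loopless : ∀ v, ¬ Adj v v
  one_way : ∀ {v w}, Adj v w → ¬ Adj w v
  cyclic : ∀ {v u w}, Adj v u → w ∈ V → csbtw v w u → Adj v w ∧ Adj w u

/-- The induced subgraph of a cyclic graph on a vertex subset `W`. -/
def CyclicGraph.induce (G : CyclicGraph) (W : Set Circ) : CyclicGraph where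
  V := G.V ∩ W
  Adj v w := G.Adj v w ∧ v ∈ W ∧ w ∈ W
  mem_of_adj h := ⟨⟨(G.mem_of_adj h.1).1, h.2.1⟩, (G.mem_of_adj h.1).2, h.2.2⟩
  loopless v h := G.loopless v h.1
  one_way h h' := G.one_way h.1 h'.1
  cyclic h hw hb := ⟨⟨(G.cyclic h.1 hw.1 hb).1, h.2.1, hw.2⟩,
    (G.cyclic h.1 hw.1 hb).2, hw.2, h.2.2⟩

/-- `IsPathFrom G m v p`: `p` describes a directed path `v = p 0 → p 1 → ⋯ → p m` in `G`. -/
def IsPathFrom (G : CyclicGraph) (m : ℕ) (v : Circ) (p : ℕ → Circ) : Prop :=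
  p 0 = v ∧ ∀ i < m, G.Adj (p i) (p (i+1))

/-- The set of total clockwise lengths `Σ d⃗(v_i, v_{i+1})` of directed paths of `m`
edges starting at `v`. -/
def gammaSet (G : CyclicGraph) (m : ℕ) (v : Circ) : Set ℝ :=
  {s | ∃ p : ℕ → Circ, IsPathFrom G m v p ∧ s = ∑ i ∈ Finset.range m, darc (p i) (p (i+1))}

/-- `γ_m(v)`: the supremum of total clockwise lengths of directed paths of `m` edges
starting at `v`. -/
def gamma (G : CyclicGraph) (m : ℕ) (v : Circ) : ℝ := sSup (gammaSet G m v)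

/-- `f_m(v) = (v + γ_m(v)) mod 1`. -/
def fm (G : CyclicGraph) (m : ℕ) (v : Circ) : Circ := v + ((gamma G m v : ℝ) : Circ)

/-- The vertex of `C_n^k` indexed by `i : ZMod n`: the point `i/n` of the circle. -/
def cpt (n : ℕ) (i : ZMod n) : Circ := (((i.val : ℝ) / (n : ℝ) : ℝ) : Circ)

/-- A cyclic homomorphism from the regular cyclic graph `C_n^k` to `G`: a homomorphism
of directed graphs which weakly preserves the clockwise cyclic order and is
non-constant whenever `k ≥ 1` (i.e. whenever `C_n^k` has a directed cycle). -/
def IsCyclicHomC (G : CyclicGraph) (n k : ℕ) (g : ZMod n → Circ) : Prop :=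
  (∀ i, g i ∈ G.V) ∧
  (∀ (i : ZMod n) (s : ℕ), 1 ≤ s → s ≤ k →
    (g i = g (i + (s : ZMod n)) ∨ G.Adj (g i) (g (i + (s : ZMod n))))) ∧
  (∀ i j l : ZMod n, csbtw (cpt n i) (cpt n j) (cpt n l) → cwbtw (g i) (g j) (g l)) ∧
  (1 ≤ k → ∃ i j, g i ≠ g j)

/-- The winding fraction of a finite cyclic graph:
`sup { k/n : there exists a cyclic homomorphism C_n^k → G }`. -/
def wfAux (G : CyclicGraph) : ℝ :=
  sSup {x : ℝ | ∃ n k : ℕ, 0 < n ∧ 2 * k < n ∧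
    (∃ g : ZMod n → Circ, IsCyclicHomC G n k g) ∧ x = (k : ℝ) / (n : ℝ)}

/-- The winding fraction of an arbitrary cyclic graph: the supremum of the winding
fractions of its finite induced subgraphs. -/
def wf (G : CyclicGraph) : ℝ :=
  sSup {x : ℝ | ∃ W : Finset Circ, ↑W ⊆ G.V ∧ x = wfAux (G.induce ↑W)}

/-- The supremum defining `wf G` is attained by some finite induced subgraph. -/
def SupAttained (G : CyclicGraph) : Prop :=
  ∃ W : Finset Circ, ↑W ⊆ G.V ∧ wfAux (G.induce ↑W) = wf G

/-- A generic cyclic graph: either `l/(2l+1) < wf G < (l+1)/(2l+3)` for some `l ∈ ℕ`,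
or `wf G = (l+1)/(2l+3)` and the supremum defining the winding fraction is not
attained. -/
def Generic (G : CyclicGraph) : Prop :=
  (∃ l : ℕ, (l : ℝ) / (2 * l + 1) < wf G ∧ wf G < ((l : ℝ) + 1) / (2 * l + 3)) ∨
  (∃ l : ℕ, wf G = ((l : ℝ) + 1) / (2 * l + 3) ∧ ¬ SupAttained G)

/-- The clique complex of (the underlying undirected graph of) a cyclic graph. -/
def cliqueCx (G : CyclicGraph) : Set (Finset Circ) :=
  {σ | σ.Nonempty ∧ ↑σ ⊆ G.V ∧ ∀ v ∈ σ, ∀ w ∈ σ, v ≠ w → (G.Adj v w ∨ G.Adj w v)}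


/-! ### Auxiliary lemmas about `darc` -/

lemma darc_mem (u v : Circ) : darc u v ∈ Set.Ico (0:ℝ) 1 := by
  have := ((AddCircle.equivIco 1 0) (v - u)).2
  simpa [darc] using this

lemma darc_nonneg (u v : Circ) : 0 ≤ darc u v := (darc_mem u v).1

lemma darc_lt_one (u v : Circ) : darc u v < 1 := (darc_mem u v).2

lemma darc_coe (u v : Circ) : ((darc u v : ℝ) : Circ) = v - u :=
  (AddCircle.equivIco 1 0).symm_apply_apply (v - u)

lemma darc_eq_of {u v : Circ} {x : ℝ} (hx : x ∈ Set.Ico (0:ℝ) 1) (h : ((x:ℝ) : Circ) = v - u) :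
    darc u v = x := by
  unfold darc
  rw [← h, AddCircle.equivIco, QuotientAddGroup.equivIcoMod_coe]
  exact toIcoMod_eq_self _ |>.mpr (by simpa using hx)

/-- The key exchange lemma: any path length from `v` is nearly matched from `u`. -/
lemma key_exchange (G : CyclicGraph) (v u : Circ) (m : ℕ) {L : ℝ}
    (hL : L ∈ gammaSet G m v) (hune : (gammaSet G m u).Nonempty) :
    ∃ s ∈ gammaSet G m u, L - darc v u ≤ s := by
  classical
  obtain ⟨p, ⟨hp0, hpadj⟩, rfl⟩ := hL
  obtain ⟨_, q, ⟨hq0, hqadj⟩, rfl⟩ := hune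
  set x : ℕ → ℝ := fun j => ∑ i ∈ Finset.range j, darc (p i) (p (i+1)) with hxdef
  set y : ℕ → ℝ := fun j => darc v u + ∑ i ∈ Finset.range j, darc (q i) (q (i+1)) with hydef
  have hxsucc : ∀ j, x (j+1) = x j + darc (p j) (p (j+1)) := by
    intro j; simp [hxdef, Finset.sum_range_succ]
  have hysucc : ∀ j, y (j+1) = y j + darc (q j) (q (j+1)) := by
    intro j; simp [hydef, Finset.sum_range_succ, add_assoc]
  have hxc : ∀ j, ((x j : ℝ) : Circ) = p j - v := by
    intro j
    induction j with
    | zero => simp [hxdef, hp0]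
    | succ j ih =>
      rw [hxsucc j, AddCircle.coe_add, ih, darc_coe]; abel
  have hyc : ∀ j, ((y j : ℝ) : Circ) = q j - v := by
    intro j
    induction j with
    | zero => simp [hydef, hq0, AddCircle.coe_add, darc_coe]
    | succ j ih =>
      rw [hysucc j, AddCircle.coe_add, ih, darc_coe]; abel
  by_cases hS : ∃ j, j < m ∧ y (j+1) < x (j+1)
  · -- switch at the first failure time `T`
    set T := Nat.find hS with hTdef
    obtain ⟨hTm, hTlt⟩ : T < m ∧ y (T+1) < x (T+1) := Nat.find_spec hS
    have hTmin : ∀ j < T, ¬(j < m ∧ y (j+1) < x (j+1)) := fun j hj => Nat.find_min hS hj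
    have hahead : ∀ j ≤ T, x j ≤ y j := by
      intro j hj
      induction j with
      | zero => simpa [hxdef, hydef] using darc_nonneg v u
      | succ j ih =>
        have hj' : j < T := lt_of_lt_of_le (Nat.lt_succ_self j) hj
        have := hTmin j hj'
        push_neg at this
        exact this (hj'.trans hTm)
    have hxT : x T ≤ y T := hahead T le_rfl
    have hyT : y T < x (T+1) := by
      have := darc_nonneg (q T) (q (T+1))
      have := hysucc T
      linarith
    have hdplt : darc (p T) (p (T+1)) = x (T+1) - x T := by
      have := hxsucc T; linarith
    have hdp1 : darc (p T) (p (T+1)) < 1 := darc_lt_one _ _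
    have dpq : darc (p T) (q T) = y T - x T := by
      refine darc_eq_of ⟨by linarith, by linarith⟩ ?_
      rw [AddCircle.coe_sub, hxc, hyc]; abel
    have dqp : darc (q T) (p (T+1)) = x (T+1) - y T := by
      refine darc_eq_of ⟨by linarith, by linarith⟩ ?_
      rw [AddCircle.coe_sub, hxc, hyc]; abel
    have hedgep : G.Adj (p T) (p (T+1)) := hpadj T hTm
    have hqTV : q T ∈ G.V := (G.mem_of_adj (hqadj T hTm)).1
    have hedge : G.Adj (q T) (p (T+1)) := by
      by_cases hqp : q T = p T
      · rw [hqp]; exact hedgep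
      · have hne2 : q T ≠ p (T+1) := by
          intro h
          have : darc (p T) (q T) = darc (p T) (p (T+1)) := by rw [h]
          rw [dpq, hdplt] at this
          linarith
        have hne3 : p (T+1) ≠ p T := by
          intro h
          exact G.loopless (p T) (h ▸ hedgep)
        have hlt : darc (p T) (q T) < darc (p T) (p (T+1)) := by
          rw [dpq, hdplt]; linarith
        exact (G.cyclic hedgep hqTV ⟨fun h => hqp h.symm, hne2, hne3, hlt⟩).2
    set r : ℕ → Circ := fun j => if j ≤ T then q j else p j with hrdef
    have hr0 : r 0 = u := by simp [hrdef, Nat.zero_le, hq0]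
    have hrT : r T = q T := by simp [hrdef]
    have hrT1 : r (T+1) = p (T+1) := by simp [hrdef]
    have hradj : ∀ i < m, G.Adj (r i) (r (i+1)) := by
      intro i hi
      rcases lt_trichotomy i T with h | h | h
      · have h1 : i ≤ T := h.le
        have h2 : i + 1 ≤ T := h
        simp only [hrdef, if_pos h1, if_pos h2]
        exact hqadj i (h.trans hTm)
      · subst h
        rw [hrT, hrT1]
        exact hedge
      · have h1 : ¬ i ≤ T := not_le.mpr h
        have h2 : ¬ i + 1 ≤ T := by omega
        simp only [hrdef, if_neg h1, if_neg h2]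
        exact hpadj i hi
    refine ⟨∑ i ∈ Finset.range m, darc (r i) (r (i+1)), ⟨r, ⟨hr0, hradj⟩, rfl⟩, ?_⟩
    have hsplitr := Finset.sum_range_add_sum_Ico (fun i => darc (r i) (r (i+1)))
      (Nat.succ_le_of_lt hTm)
    have hsplitp := Finset.sum_range_add_sum_Ico (fun i => darc (p i) (p (i+1)))
      (Nat.succ_le_of_lt hTm)
    have hcongr1 : ∑ i ∈ Finset.range T, darc (r i) (r (i+1))
        = ∑ i ∈ Finset.range T, darc (q i) (q (i+1)) := by
      refine Finset.sum_congr rfl fun i hi => ?_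
      have hi' : i < T := Finset.mem_range.mp hi
      have h1 : i ≤ T := hi'.le
      have h2 : i + 1 ≤ T := hi'
      simp only [hrdef, if_pos h1, if_pos h2]
    have hcongr2 : ∑ i ∈ Finset.Ico (T+1) m, darc (r i) (r (i+1))
        = ∑ i ∈ Finset.Ico (T+1) m, darc (p i) (p (i+1)) := by
      refine Finset.sum_congr rfl fun i hi => ?_
      have hi' : T + 1 ≤ i := (Finset.mem_Ico.mp hi).1
      have h1 : ¬ i ≤ T := by omega
      have h2 : ¬ i + 1 ≤ T := by omega
      simp only [hrdef, if_neg h1, if_neg h2]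
    have hsum1 : ∑ i ∈ Finset.range (T+1), darc (r i) (r (i+1))
        = (y T - darc v u) + (x (T+1) - y T) := by
      rw [Finset.sum_range_succ, hcongr1, hrT, hrT1, dqp]
      have : ∑ i ∈ Finset.range T, darc (q i) (q (i+1)) = y T - darc v u := by
        simp [hydef]
      rw [this]
    have hsum2 : ∑ i ∈ Finset.range (T+1), darc (p i) (p (i+1)) = x (T+1) := by
      simp [hxdef]
    have hxm : ∑ i ∈ Finset.range m, darc (p i) (p (i+1)) = x m := by simp [hxdef]
    rw [hxm]
    rw [← hsplitr, hsum1, hcongr2]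
    have hIco : ∑ i ∈ Finset.Ico (T+1) m, darc (p i) (p (i+1)) = x m - x (T+1) := by
      have := hsplitp
      rw [hsum2] at this
      simp only [hxdef] at this ⊢
      linarith
    rw [hIco]
    linarith
  · push_neg at hS
    refine ⟨_, ⟨q, ⟨hq0, hqadj⟩, rfl⟩, ?_⟩
    have hxy : ∀ j ≤ m, x j ≤ y j := by
      intro j hj
      induction j with
      | zero => simpa [hxdef, hydef] using darc_nonneg v u
      | succ j ih => exact hS j (lt_of_lt_of_le (Nat.lt_succ_self j) hj)
    have := hxy m le_rfl
    simp only [hxdef, hydef] at this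
    linarith

lemma gammaSet_bddAbove (G : CyclicGraph) (m : ℕ) (w : Circ) :
    BddAbove (gammaSet G m w) := by
  refine ⟨m, fun s hs => ?_⟩
  obtain ⟨p, _, rfl⟩ := hs
  calc ∑ i ∈ Finset.range m, darc (p i) (p (i+1))
      ≤ ∑ _i ∈ Finset.range m, (1:ℝ) :=
        Finset.sum_le_sum fun i _ => (darc_lt_one _ _).le
    _ = m := by simp

lemma gamma_le (G : CyclicGraph) (v u : Circ) (m : ℕ)
    (hvne : (gammaSet G m v).Nonempty) (hune : (gammaSet G m u).Nonempty) :
    gamma G m v ≤ gamma G m u + darc v u := by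
  refine csSup_le hvne fun L hL => ?_
  obtain ⟨s, hs, hle⟩ := key_exchange G v u m hL hune
  have := le_csSup (gammaSet_bddAbove G m u) hs
  unfold gamma
  linarith

/-- **Discrepancy of path lengths** (Adamaszek–Adams–Reddy, Lemma 5.5). In a cyclic
graph, for any two vertices `v, u` and any `m ∈ ℕ` (such that directed paths of `m`
edges exist from `v` and from `u`, so that `γ_m` is defined there),
`|γ_m(v) − γ_m(u)| < 1`. -/
theorem cyclicGraph_gamma_discrepancy (G : CyclicGraph) (v u : Circ)
    (hv : v ∈ G.V) (hu : u ∈ G.V) (m : ℕ)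
    (hvne : (gammaSet G m v).Nonempty) (hune : (gammaSet G m u).Nonempty) :
    |gamma G m v - gamma G m u| < 1 := by
  rw [abs_sub_lt_iff]
  constructor
  · have := gamma_le G v u m hvne hune
    have := darc_lt_one v u
    linarith
  · have := gamma_le G u v m hune hvne
    have := darc_lt_one u v
    linarith

end
end

section
/- Let Y = {(x,y) ∈ ℝ² : (x/a)² + y² = 1} be an ellipse of small eccentricity, meaning 1 < a ≤ √2, and let p ∈ Y. Then there exists a unique equilateral triangle inscribed in Y (i.e. with all three vertices on Y) having p as one of its vertices. -/
open Filter Topology Metric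

noncomputable section

/-! ### The ellipse -/

/-- The point `(x, y)` of the Euclidean plane. -/
def pt2 (x y : ℝ) : EuclideanSpace ℝ (Fin 2) := (WithLp.equiv 2 (Fin 2 → ℝ)).symm ![x, y]

/-- The ellipse `{(x,y) : (x/a)² + y² = 1}` in the Euclidean plane. -/
def ellipse (a : ℝ) : Set (EuclideanSpace ℝ (Fin 2)) :=
  {p | (p 0 / a) ^ 2 + (p 1) ^ 2 = 1}

/-- `r₁ = 4√3·a/(a²+3)`. -/
def ellipseR1 (a : ℝ) : ℝ := 4 * Real.sqrt 3 * a / (a ^ 2 + 3)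

/-- `r₂ = 4√3·a²/(3a²+1)`. -/
def ellipseR2 (a : ℝ) : ℝ := 4 * Real.sqrt 3 * a ^ 2 / (3 * a ^ 2 + 1)

/-- A direction vector of the line normal to the ellipse `(x/a)² + y² = 1` at the
point `p` (proportional to the gradient `(2x/a², 2y)` at `p`). -/
def normalDir (a : ℝ) (p : EuclideanSpace ℝ (Fin 2)) : EuclideanSpace ℝ (Fin 2) :=
  pt2 (p 0 / a ^ 2) (p 1)

/-- An inscribed equilateral triangle in the ellipse: three distinct points of the
ellipse that are pairwise at equal Euclidean distance. -/
def IsInscribedEqTri (a : ℝ) (T : Set (EuclideanSpace ℝ (Fin 2))) : Prop :=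
  T ⊆ ellipse a ∧ ∃ x y z : EuclideanSpace ℝ (Fin 2), x ≠ y ∧ y ≠ z ∧ x ≠ z ∧
    T = {x, y, z} ∧ dist x y = dist y z ∧ dist x z = dist y z

namespace EllipseAux

open Real

/-! ### Auxiliary polynomials -/

def Dq (a C S : ℝ) : ℝ :=
  4*a*(a+1) + (a-1)^3*(C^2-S^2) + (a-1)^2*(a+1)*((C^2-S^2)^2-(2*C*S)^2)

def Nq (a C S : ℝ) : ℝ :=
  (a-1)*(a^2+6*a+1)*(2*C*S) - (a-1)^2*(a+1)*(2*(2*C*S)*(C^2-S^2))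

def Dd (a C S : ℝ) : ℝ := (4:ℝ)*C*S + (-12:ℝ)*C*S*a + (12:ℝ)*C*S*a^2 + (-4:ℝ)*C*S*a^3 + (16:ℝ)*C*S^3 + (-16:ℝ)*C*S^3*a + (-16:ℝ)*C*S^3*a^2 + (16:ℝ)*C*S^3*a^3 + (-16:ℝ)*C^3*S + (16:ℝ)*C^3*S*a + (16:ℝ)*C^3*S*a^2 + (-16:ℝ)*C^3*S*a^3

def Nd (a C S : ℝ) : ℝ := (2:ℝ)*S^2 + (10:ℝ)*S^2*a + (-10:ℝ)*S^2*a^2 + (-2:ℝ)*S^2*a^3 + (-4:ℝ)*S^4 + (4:ℝ)*S^4*a + (4:ℝ)*S^4*a^2 + (-4:ℝ)*S^4*a^3 + (-2:ℝ)*C^2 + (-10:ℝ)*C^2*a + (10:ℝ)*C^2*a^2 + (2:ℝ)*C^2*a^3 + (24:ℝ)*C^2*S^2 + (-24:ℝ)*C^2*S^2*a + (-24:ℝ)*C^2*S^2*a^2 + (24:ℝ)*C^2*S^2*a^3 + (-4:ℝ)*C^4 + (4:ℝ)*C^4*a + (4:ℝ)*C^4*a^2 + (-4:ℝ)*C^4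*a^3

def DD (a φ : ℝ) : ℝ := Dq a (cos φ) (sin φ)
def NN (a φ : ℝ) : ℝ := Nq a (cos φ) (sin φ)
def sq2 (a φ : ℝ) : ℝ := DD a φ ^ 2 + NN a φ ^ 2
def tau (a φ : ℝ) : ℝ := φ + arctan (NN a φ / DD a φ)
def vtx (a φ : ℝ) : EuclideanSpace ℝ (Fin 2) := pt2 (a * cos (tau a φ)) (sin (tau a φ))
def Tset (a φ : ℝ) : Set (EuclideanSpace ℝ (Fin 2)) :=
  {vtx a φ, vtx a (φ + 2*π/3), vtx a (φ + 4*π/3)}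

/-! ### Polynomial identities -/

lemma hCSφ (φ : ℝ) : cos φ ^2 + sin φ ^2 = 1 := by
  rw [← Real.sin_sq_add_cos_sq φ]; ring

lemma B1 (a C S : ℝ) (hCS : C^2 + S^2 = 1) :
    Dq a C S * C - Nq a C S * S = 2*a*(a^2-1)*(C^3-3*C*S^2) + 8*a*C := by
  simp only [Dq, Nq]
  linear_combination ((4:ℝ)*C*a + (-4:ℝ)*C*a^2 + (-3:ℝ)*C*S^2 + (3:ℝ)*C*S^2*a + (3:ℝ)*C*S^2*a^2 + (-3:ℝ)*C*S^2*a^3 + (1:ℝ)*C^3 + (-1:ℝ)*C^3*a + (-1:ℝ)*C^3*a^2 + (1:ℝ)*C^3*a^3) * hCS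

lemma B2 (a C S : ℝ) (hCS : C^2 + S^2 = 1) :
    Dq a C S * S + Nq a C S * C = 2*(a^2-1)*(3*C^2*S-S^3) + 8*a^2*S := by
  simp only [Dq, Nq]
  linear_combination ((-4:ℝ)*S*a + (4:ℝ)*S*a^2 + (1:ℝ)*S^3 + (-1:ℝ)*S^3*a + (-1:ℝ)*S^3*a^2 + (1:ℝ)*S^3*a^3 + (-3:ℝ)*C^2*S + (3:ℝ)*C^2*S*a + (3:ℝ)*C^2*S*a^2 + (-3:ℝ)*C^2*S*a^3) * hCS

lemma Aprime (a C S : ℝ) (hCS : C^2 + S^2 = 1) :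
    Dq a C S ^2 + Nq a C S ^2
      = 32*a^2*(a^2+1) + 4*(a^2-1)^2*(a^2*(C^3-3*C*S^2)^2 + (3*C^2*S-S^3)^2) := by
  simp only [Dq, Nq]
  linear_combination ((16:ℝ)*a^2 + (-32:ℝ)*a^3 + (16:ℝ)*a^4 + (-8:ℝ)*S^2*a + (32:ℝ)*S^2*a^2 + (-32:ℝ)*S^2*a^3 + (8:ℝ)*S^2*a^5 + (-1:ℝ)*S^4 + (-10:ℝ)*S^4*a + (17:ℝ)*S^4*a^2 + (4:ℝ)*S^4*a^3 + (-15:ℝ)*S^4*a^4 + (6:ℝ)*S^4*a^5 + (-1:ℝ)*S^4*a^6 + (1:ℝ)*S^6 + (-2:ℝ)*S^6*a + (-1:ℝ)*S^6*a^2 + (4:ℝ)*S^6*a^3 + (-1:ℝ)*S^6*a^4 + (-2:ℝ)*S^6*a^5 + (1:ℝ)*S^6*a^6 + (8:ℝ)*C^2*a + (-32:ℝ)*C^2*a^3 + (32:ℝ)*C^2*a^4 + (-8:ℝ)*C^2*a^5 + (-2:ℝ)*C^2*S^2 + (-4:ℝ)*C^2*S^2*a + (2:ℝ)*C^2*S^2*a^2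 + (8:ℝ)*C^2*S^2*a^3 + (2:ℝ)*C^2*S^2*a^4 + (-4:ℝ)*C^2*S^2*a^5 + (-2:ℝ)*C^2*S^2*a^6 + (3:ℝ)*C^2*S^4 + (-6:ℝ)*C^2*S^4*a + (-3:ℝ)*C^2*S^4*a^2 + (12:ℝ)*C^2*S^4*a^3 + (-3:ℝ)*C^2*S^4*a^4 + (-6:ℝ)*C^2*S^4*a^5 + (3:ℝ)*C^2*S^4*a^6 + (-1:ℝ)*C^4 + (6:ℝ)*C^4*a + (-15:ℝ)*C^4*a^2 + (4:ℝ)*C^4*a^3 + (17:ℝ)*C^4*a^4 + (-10:ℝ)*C^4*a^5 + (-1:ℝ)*C^4*a^6 + (3:ℝ)*C^4*S^2 + (-6:ℝ)*C^4*S^2*a + (-3:ℝ)*C^4*S^2*a^2 + (12:ℝ)*C^4*S^2*a^3 + (-3:ℝ)*C^4*S^2*a^4 + (-6:ℝ)*C^4*S^2*a^5 + (3:ℝ)*C^4*S^2*a^6 + (1:ℝ)*C^6 + (-2:ℝ)*C^6*a + (-1:ℝ)*C^6*a^2 + (4:ℝ)*C^6*a^3 + (-1:ℝ)*C^6*a^4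 + (-2:ℝ)*C^6*a^5 + (1:ℝ)*C^6*a^6) * hCS

lemma Per3c (C S t : ℝ) (hCS : C^2 + S^2 = 1) (ht : t^2 = 3) :
    (-(C+t*S)/2)^3 - 3*(-(C+t*S)/2)*((t*C-S)/2)^2 = C^3-3*C*S^2 := by
  linear_combination (((3:ℝ)/8)*S*t + ((-1:ℝ)/8)*S*t^3 + ((27:ℝ)/8)*C + ((-9:ℝ)/8)*C*t^2) * hCS + (((-1:ℝ)/8)*S*t + ((-9:ℝ)/8)*C + ((1:ℝ)/2)*C^2*S*t + ((3:ℝ)/2)*C^3) * ht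

lemma Per3s (C S t : ℝ) (hCS : C^2 + S^2 = 1) (ht : t^2 = 3) :
    3*(-(C+t*S)/2)^2*((t*C-S)/2) - ((t*C-S)/2)^3 = 3*C^2*S-S^3 := by
  linear_combination (((9:ℝ)/8)*S + ((-3:ℝ)/8)*S*t^2 + ((-9:ℝ)/8)*C*t + ((3:ℝ)/8)*C*t^3) * hCS + (((-3:ℝ)/8)*S + ((3:ℝ)/8)*C*t + ((3:ℝ)/2)*C^2*S + ((-1:ℝ)/2)*C^3*t) * ht

lemma chord (C S t : ℝ) (hCS : C^2 + S^2 = 1) (ht : t^2 = 3) :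
    (C - (-(C+t*S)/2))^2 + (S - ((t*C-S)/2))^2 = 3 := by
  linear_combination (((9:ℝ)/4) + ((1:ℝ)/4)*t^2) * hCS + (((1:ℝ)/4)) * ht

lemma PqId (a C S : ℝ) (hCS : C^2 + S^2 = 1) :
    Dq a C S ^2 + Nq a C S^2 + Nd a C S * Dq a C S - Nq a C S * Dd a C S
      = 28*a + 72*a^3 - 36*a^5 + C^2*(64*a - 256*a^3 + 192*a^5)
        + C^4*(-128*a + 256*a^3 - 128*a^5) := by
  simp only [Dq, Nq, Dd, Nd]
  linear_combination ((28:ℝ)*a + (-16:ℝ)*a^2 + (40:ℝ)*a^3 + (-16:ℝ)*a^4 + (-36:ℝ)*a^5 + (12:ℝ)*S^2*a + (-48:ℝ)*S^2*a^2 + (40:ℝ)*S^2*a^3 + (16:ℝ)*S^2*a^4 + (-20:ℝ)*S^2*a^5 + (-3:ℝ)*S^4 + (22:ℝ)*S^4*a + (-29:ℝ)*S^4*a^2 + (-12:ℝ)*S^4*a^3 + (35:ℝ)*S^4*a^4 + (-10:ℝ)*S^4*a^5 + (-3:ℝ)*S^4*a^6 + (-3:ℝ)*S^6 + (6:ℝ)*S^6*a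 + (3:ℝ)*S^6*a^2 + (-12:ℝ)*S^6*a^3 + (3:ℝ)*S^6*a^4 + (6:ℝ)*S^6*a^5 + (-3:ℝ)*S^6*a^6 + (108:ℝ)*C^2*a + (16:ℝ)*C^2*a^2 + (-216:ℝ)*C^2*a^3 + (-48:ℝ)*C^2*a^4 + (140:ℝ)*C^2*a^5 + (-6:ℝ)*C^2*S^2 + (12:ℝ)*C^2*S^2*a + (6:ℝ)*C^2*S^2*a^2 + (-24:ℝ)*C^2*S^2*a^3 + (6:ℝ)*C^2*S^2*a^4 + (12:ℝ)*C^2*S^2*a^5 + (-6:ℝ)*C^2*S^2*a^6 + (-9:ℝ)*C^2*S^4 + (18:ℝ)*C^2*S^4*a + (9:ℝ)*C^2*S^4*a^2 + (-36:ℝ)*C^2*S^4*a^3 + (9:ℝ)*C^2*S^4*a^4 + (18:ℝ)*C^2*S^4*a^5 + (-9:ℝ)*C^2*S^4*a^6 + (-3:ℝ)*C^4 + (-10:ℝ)*C^4*a + (35:ℝ)*C^4*a^2 + (-12:ℝ)*C^4*a^3 + (-29:ℝ)*C^4*a^4 + (22:ℝ)*C^4*a^5 + (-3:ℝ)*C^4*a^6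 + (-9:ℝ)*C^4*S^2 + (18:ℝ)*C^4*S^2*a + (9:ℝ)*C^4*S^2*a^2 + (-36:ℝ)*C^4*S^2*a^3 + (9:ℝ)*C^4*S^2*a^4 + (18:ℝ)*C^4*S^2*a^5 + (-9:ℝ)*C^4*S^2*a^6 + (-3:ℝ)*C^6 + (6:ℝ)*C^6*a + (3:ℝ)*C^6*a^2 + (-12:ℝ)*C^6*a^3 + (3:ℝ)*C^6*a^4 + (6:ℝ)*C^6*a^5 + (-3:ℝ)*C^6*a^6) * hCS

lemma Pq_pos (a x : ℝ) (ha1 : 1 < a) (ha2 : a^2 ≤ 2) (hx0 : 0 ≤ x) (hx1 : x ≤ 1) :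
    0 < 28*a + 72*a^3 - 36*a^5 + x*(64*a - 256*a^3 + 192*a^5)
        + x^2*(-128*a + 256*a^3 - 128*a^5) := by
  have ha0 : 0 < a := by linarith
  have key : 28*a + 72*a^3 - 36*a^5 + x*(64*a - 256*a^3 + 192*a^5)
        + x^2*(-128*a + 256*a^3 - 128*a^5)
      = 4*a*((1-x)*(7 + 18*a^2 - 9*a^4) + x*(7*a^4 + 18*a^2 - 9)
          + 32*(a^2-1)^2*(x*(1-x))) := by ring
  rw [key]
  have h0 : (0:ℝ) < 7 + 18*a^2 - 9*a^4 := by nlinarith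
  have h1 : (0:ℝ) < 7*a^4 + 18*a^2 - 9 := by nlinarith
  have h2 : (0:ℝ) ≤ 32*(a^2-1)^2*(x*(1-x)) :=
    mul_nonneg (by positivity) (mul_nonneg hx0 (by linarith))
  have hb : 0 < (1-x)*(7 + 18*a^2 - 9*a^4) + x*(7*a^4 + 18*a^2 - 9)
      + 32*(a^2-1)^2*(x*(1-x)) := by
    rcases lt_or_ge x 1 with h | h
    · have t1 : 0 < (1-x)*(7 + 18*a^2 - 9*a^4) := mul_pos (by linarith) h0
      have t2 : 0 ≤ x*(7*a^4 + 18*a^2 - 9) := mul_nonneg hx0 h1.le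
      linarith
    · have hx : x = 1 := le_antisymm hx1 h
      rw [hx]; ring_nf; nlinarith
  positivity

lemma Dq_pos (a C S : ℝ) (hCS : C^2 + S^2 = 1) (ha1 : 1 < a) (ha2 : a^2 ≤ 2) :
    0 < Dq a C S := by
  have h4 : (C^2-S^2)^2 + (2*C*S)^2 = 1 := by linear_combination (C^2+S^2+1) * hCS
  have h1 : (C^2-S^2)^2 ≤ 1 := by nlinarith [sq_nonneg (2*C*S)]
  have h2 : -1 ≤ C^2-S^2 := by nlinarith
  have h3 : C^2 - S^2 ≤ 1 := by nlinarith
  simp only [Dq]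
  nlinarith [sq_nonneg (C^2-S^2), mul_nonneg (mul_nonneg (sub_nonneg.2 ha1.le) (sub_nonneg.2 ha1.le)) (sub_nonneg.2 ha1.le), sq_nonneg (a-1), sq_nonneg (C*S)]

/-! ### Basic properties -/

variable {a : ℝ}

lemma DD_pos (ha1 : 1 < a) (ha2 : a^2 ≤ 2) (φ : ℝ) : 0 < DD a φ :=
  Dq_pos a _ _ (hCSφ φ) ha1 ha2

lemma sq2_pos (ha1 : 1 < a) (ha2 : a^2 ≤ 2) (φ : ℝ) : 0 < sq2 a φ := by
  have h1 := DD_pos ha1 ha2 φ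
  have h2 : DD a φ ^2 > 0 := by positivity
  have h3 : NN a φ ^2 ≥ 0 := sq_nonneg _
  rw [sq2]; linarith

lemma sqrt_sq2_pos (ha1 : 1 < a) (ha2 : a^2 ≤ 2) (φ : ℝ) : 0 < Real.sqrt (sq2 a φ) :=
  Real.sqrt_pos.2 (sq2_pos ha1 ha2 φ)

lemma cos_tau (ha1 : 1 < a) (ha2 : a^2 ≤ 2) (φ : ℝ) :
    cos (tau a φ) = (DD a φ * cos φ - NN a φ * sin φ) / Real.sqrt (sq2 a φ) := by
  have hD := DD_pos ha1 ha2 φ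
  have hDne := hD.ne'
  have hs := sqrt_sq2_pos ha1 ha2 φ
  rw [tau, cos_add, cos_arctan, sin_arctan]
  have e1 : 1 + (NN a φ / DD a φ)^2 = sq2 a φ / DD a φ ^2 := by
    rw [sq2]; field_simp
  rw [e1, Real.sqrt_div (sq2_pos ha1 ha2 φ).le, Real.sqrt_sq hD.le]
  field_simp

lemma sin_tau (ha1 : 1 < a) (ha2 : a^2 ≤ 2) (φ : ℝ) :
    sin (tau a φ) = (DD a φ * sin φ + NN a φ * cos φ) / Real.sqrt (sq2 a φ) := by
  have hD := DD_pos ha1 ha2 φ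
  have hDne := hD.ne'
  have hs := sqrt_sq2_pos ha1 ha2 φ
  rw [tau, sin_add, cos_arctan, sin_arctan]
  have e1 : 1 + (NN a φ / DD a φ)^2 = sq2 a φ / DD a φ ^2 := by
    rw [sq2]; field_simp
  rw [e1, Real.sqrt_div (sq2_pos ha1 ha2 φ).le, Real.sqrt_sq hD.le]
  field_simp

/-! ### Derivative and monotonicity of `tau` -/

lemma hasDerivAt_DD (a φ : ℝ) : HasDerivAt (DD a) (Dd a (cos φ) (sin φ)) φ := by
  have hc := Real.hasDerivAt_cos φ
  have hs := Real.hasDerivAt_sin φ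
  have hu : HasDerivAt (fun x => cos x ^ 2 - sin x ^ 2)
      ((2:ℕ) * cos φ ^ (2-1) * (-sin φ) - (2:ℕ) * sin φ ^ (2-1) * cos φ) φ :=
    (hc.pow 2).sub (hs.pow 2)
  have hw : HasDerivAt (fun x => 2 * cos x * sin x)
      (2 * (-sin φ) * sin φ + 2 * cos φ * cos φ) φ := (hc.const_mul 2).mul hs
  have H := ((hasDerivAt_const φ (4*a*(a+1))).add (hu.const_mul ((a-1)^3))).add
      (((hu.pow 2).sub (hw.pow 2)).const_mul ((a-1)^2*(a+1)))
  have hval : Dd a (cos φ) (sin φ)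
      = 0 + (a-1)^3 * ((2:ℕ) * cos φ ^ (2-1) * (-sin φ) - (2:ℕ) * sin φ ^ (2-1) * cos φ)
        + (a-1)^2*(a+1) * ((2:ℕ) * (cos φ ^2 - sin φ^2) ^ (2-1)
            * ((2:ℕ) * cos φ ^ (2-1) * (-sin φ) - (2:ℕ) * sin φ ^ (2-1) * cos φ)
          - (2:ℕ) * (2*cos φ*sin φ) ^ (2-1) * (2 * (-sin φ) * sin φ + 2 * cos φ * cos φ)) := by
    simp only [Dd]; push_cast; ring
  rw [hval]
  exact H

lemma hasDerivAt_NN (a φ : ℝ) : HasDerivAt (NN a) (Nd a (cos φ) (sin φ)) φ := by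
  have hc := Real.hasDerivAt_cos φ
  have hs := Real.hasDerivAt_sin φ
  have hu : HasDerivAt (fun x => cos x ^ 2 - sin x ^ 2)
      ((2:ℕ) * cos φ ^ (2-1) * (-sin φ) - (2:ℕ) * sin φ ^ (2-1) * cos φ) φ :=
    (hc.pow 2).sub (hs.pow 2)
  have hw : HasDerivAt (fun x => 2 * cos x * sin x)
      (2 * (-sin φ) * sin φ + 2 * cos φ * cos φ) φ := (hc.const_mul 2).mul hs
  have hw2 : HasDerivAt (fun x => 2 * (2 * cos x * sin x) * (cos x ^2 - sin x ^2))
      (2 * (2 * (-sin φ) * sin φ + 2 * cos φ * cos φ) * (cos φ ^2 - sin φ ^2)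
        + 2 * (2*cos φ*sin φ) * ((2:ℕ) * cos φ ^ (2-1) * (-sin φ) - (2:ℕ) * sin φ ^ (2-1) * cos φ)) φ :=
    (hw.const_mul 2).mul hu
  have H := (hw.const_mul ((a-1)*(a^2+6*a+1))).sub (hw2.const_mul ((a-1)^2*(a+1)))
  have hval : Nd a (cos φ) (sin φ)
      = (a-1)*(a^2+6*a+1) * (2 * (-sin φ) * sin φ + 2 * cos φ * cos φ)
        - (a-1)^2*(a+1) * (2 * (2 * (-sin φ) * sin φ + 2 * cos φ * cos φ) * (cos φ ^2 - sin φ ^2)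
        + 2 * (2*cos φ*sin φ) * ((2:ℕ) * cos φ ^ (2-1) * (-sin φ) - (2:ℕ) * sin φ ^ (2-1) * cos φ)) := by
    simp only [Nd]; push_cast; ring
  rw [hval]
  exact H

lemma hasDerivAt_tau (ha1 : 1 < a) (ha2 : a^2 ≤ 2) (φ : ℝ) :
    HasDerivAt (tau a)
      ((sq2 a φ + Nd a (cos φ) (sin φ) * DD a φ - NN a φ * Dd a (cos φ) (sin φ)) / sq2 a φ) φ := by
  have hD := DD_pos ha1 ha2 φ
  have hq : HasDerivAt (fun x => NN a x / DD a x)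
      ((Nd a (cos φ) (sin φ) * DD a φ - NN a φ * Dd a (cos φ) (sin φ)) / DD a φ ^ 2) φ :=
    (hasDerivAt_NN a φ).div (hasDerivAt_DD a φ) hD.ne'
  have ha' := hq.arctan
  have h := (hasDerivAt_id φ).add ha'
  have hval : (sq2 a φ + Nd a (cos φ) (sin φ) * DD a φ - NN a φ * Dd a (cos φ) (sin φ)) / sq2 a φ
      = 1 + 1 / (1 + (NN a φ / DD a φ) ^ 2)
          * ((Nd a (cos φ) (sin φ) * DD a φ - NN a φ * Dd a (cos φ) (sin φ)) / DD a φ ^ 2) := by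
    have hs2 : sq2 a φ ≠ 0 := (sq2_pos ha1 ha2 φ).ne'
    rw [sq2] at hs2 ⊢
    field_simp
    ring
  rw [hval]
  exact h

lemma tau_deriv_pos (ha1 : 1 < a) (ha2 : a^2 ≤ 2) (φ : ℝ) :
    0 < (sq2 a φ + Nd a (cos φ) (sin φ) * DD a φ - NN a φ * Dd a (cos φ) (sin φ)) / sq2 a φ := by
  apply div_pos _ (sq2_pos ha1 ha2 φ)
  have h := PqId a (cos φ) (sin φ) (hCSφ φ)
  have h2 := Pq_pos a (cos φ ^2) ha1 ha2 (sq_nonneg _) (by nlinarith [sq_nonneg (sin φ), hCSφ φ])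
  rw [sq2, DD, NN]
  calc Dq a (cos φ) (sin φ) ^ 2 + Nq a (cos φ) (sin φ) ^ 2
      + Nd a (cos φ) (sin φ) * Dq a (cos φ) (sin φ)
      - Nq a (cos φ) (sin φ) * Dd a (cos φ) (sin φ)
      = 28*a + 72*a^3 - 36*a^5 + (cos φ^2)*(64*a - 256*a^3 + 192*a^5)
        + (cos φ^2)^2*(-128*a + 256*a^3 - 128*a^5) := by linear_combination h
    _ > 0 := by linarith [h2]

lemma tau_strictMono (ha1 : 1 < a) (ha2 : a^2 ≤ 2) : StrictMono (tau a) := by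
  apply strictMono_of_deriv_pos
  intro φ
  rw [(hasDerivAt_tau ha1 ha2 φ).deriv]
  exact tau_deriv_pos ha1 ha2 φ

lemma tau_surj (ha1 : 1 < a) (ha2 : a^2 ≤ 2) : Function.Surjective (tau a) := by
  have hdiff : Differentiable ℝ (tau a) := fun φ => (hasDerivAt_tau ha1 ha2 φ).differentiableAt
  have hcont : Continuous (tau a) := hdiff.continuous
  apply hcont.surjective
  · apply tendsto_atTop_mono (fun φ => ?_) (tendsto_atTop_add_const_right atTop (-(π/2)) tendsto_id)
    have := Real.neg_pi_div_two_lt_arctan (NN a φ / DD a φ)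
    simp only [tau, id]
    linarith
  · apply tendsto_atBot_mono (fun φ => ?_) (tendsto_atBot_add_const_right atBot (π/2) tendsto_id)
    have := Real.arctan_lt_pi_div_two (NN a φ / DD a φ)
    simp only [tau, id]
    linarith

lemma tau_periodic (n : ℤ) (φ : ℝ) : tau a (φ + n * (2*π)) = tau a φ + n * (2*π) := by
  simp only [tau, NN, DD, Real.cos_add_int_mul_two_pi, Real.sin_add_int_mul_two_pi]
  ring

/-! ### Shift lemmas -/

lemma ht3 : (Real.sqrt 3)^2 = 3 := Real.sq_sqrt (by norm_num)

lemma cos_two_pi_three : cos (2*π/3) = -(1/2) := by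
  rw [show (2*π/3) = π - π/3 by ring, Real.cos_pi_sub, Real.cos_pi_div_three]
lemma sin_two_pi_three : sin (2*π/3) = Real.sqrt 3 / 2 := by
  rw [show (2*π/3) = π - π/3 by ring, Real.sin_pi_sub, Real.sin_pi_div_three]
lemma cos_shift (x : ℝ) : cos (x + 2*π/3) = -(cos x + Real.sqrt 3 * sin x)/2 := by
  rw [cos_add, cos_two_pi_three, sin_two_pi_three]; ring
lemma sin_shift (x : ℝ) : sin (x + 2*π/3) = (Real.sqrt 3 * cos x - sin x)/2 := by
  rw [sin_add, cos_two_pi_three, sin_two_pi_three]; ring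
lemma cos_shift2 (x : ℝ) : cos (x + 4*π/3) = (Real.sqrt 3 * sin x - cos x)/2 := by
  rw [show x + 4*π/3 = x + 2*π/3 + 2*π/3 by ring, cos_shift, cos_shift, sin_shift]
  linear_combination (-(cos x)/4) * ht3
lemma sin_shift2 (x : ℝ) : sin (x + 4*π/3) = -(sin x + Real.sqrt 3 * cos x)/2 := by
  rw [show x + 4*π/3 = x + 2*π/3 + 2*π/3 by ring, sin_shift, cos_shift, sin_shift]
  linear_combination (-(sin x)/4) * ht3

lemma c3_shift (φ : ℝ) : cos (φ+2*π/3)^3 - 3*cos (φ+2*π/3)*sin (φ+2*π/3)^2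
    = cos φ^3 - 3*cos φ*sin φ^2 := by
  rw [cos_shift, sin_shift]; exact Per3c _ _ _ (hCSφ φ) ht3
lemma s3_shift (φ : ℝ) : 3*cos (φ+2*π/3)^2*sin (φ+2*π/3) - sin (φ+2*π/3)^3
    = 3*cos φ^2*sin φ - sin φ^3 := by
  rw [cos_shift, sin_shift]; exact Per3s _ _ _ (hCSφ φ) ht3

lemma sq2_shift (a φ : ℝ) : sq2 a (φ + 2*π/3) = sq2 a φ := by
  rw [sq2, sq2, DD, NN, DD, NN, Aprime a _ _ (hCSφ (φ+2*π/3)), Aprime a _ _ (hCSφ φ),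
    c3_shift, s3_shift]

lemma dist_pt2 (x y x' y' : ℝ) :
    dist (pt2 x y) (pt2 x' y') = Real.sqrt ((x-x')^2 + (y-y')^2) := by
  rw [EuclideanSpace.dist_eq]
  have h0 : ∀ u v : ℝ, dist u v ^ 2 = (u - v)^2 := by
    intro u v; rw [Real.dist_eq, sq_abs]
  rw [Fin.sum_univ_two]
  show Real.sqrt (dist x x' ^2 + dist y y' ^2) = _
  rw [h0, h0]

lemma pt2_congr {u v u' v' : ℝ} (h1 : u = u') (h2 : v = v') : pt2 u v = pt2 u' v' := by
  rw [h1, h2]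

lemma dist_sq_pt2 (x y x' y' : ℝ) :
    dist (pt2 x y) (pt2 x' y') ^ 2 = (x-x')^2 + (y-y')^2 := by
  rw [dist_pt2, Real.sq_sqrt (by positivity)]

/-! ### Distance between consecutive vertices -/

lemma vtx_dist (ha1 : 1 < a) (ha2 : a^2 ≤ 2) (φ : ℝ) :
    dist (vtx a φ) (vtx a (φ + 2*π/3)) = Real.sqrt (192*a^4 / sq2 a φ) := by
  have hs := Real.sqrt_pos.2 (sq2_pos ha1 ha2 φ)
  have hsne := hs.ne'
  have hs2 : (Real.sqrt (sq2 a φ))^2 = sq2 a φ := Real.sq_sqrt (sq2_pos ha1 ha2 φ).le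
  rw [vtx, vtx, dist_pt2]
  have key1 : (DD a φ * cos φ - NN a φ * sin φ)
      - (DD a (φ+2*π/3) * cos (φ+2*π/3) - NN a (φ+2*π/3) * sin (φ+2*π/3))
      = 8*a*(cos φ - cos (φ+2*π/3)) := by
    have b1 := B1 a (cos φ) (sin φ) (hCSφ φ)
    have b1' := B1 a (cos (φ+2*π/3)) (sin (φ+2*π/3)) (hCSφ _)
    have hc3 := c3_shift φ
    rw [DD, NN, DD, NN]
    linear_combination b1 - b1' - 2*a*(a^2-1)*hc3
  have key2 : (DD a φ * sin φ + NN a φ * cos φ)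
      - (DD a (φ+2*π/3) * sin (φ+2*π/3) + NN a (φ+2*π/3) * cos (φ+2*π/3))
      = 8*a^2*(sin φ - sin (φ+2*π/3)) := by
    have b2 := B2 a (cos φ) (sin φ) (hCSφ φ)
    have b2' := B2 a (cos (φ+2*π/3)) (sin (φ+2*π/3)) (hCSφ _)
    have hs3 := s3_shift φ
    rw [DD, NN, DD, NN]
    linear_combination b2 - b2' - 2*(a^2-1)*hs3
  have hxd : a * cos (tau a φ) - a * cos (tau a (φ+2*π/3))
      = 8*a^2*(cos φ - cos (φ+2*π/3)) / Real.sqrt (sq2 a φ) := by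
    rw [cos_tau ha1 ha2, cos_tau ha1 ha2, sq2_shift]
    linear_combination (a / Real.sqrt (sq2 a φ)) * key1
  have hyd : sin (tau a φ) - sin (tau a (φ+2*π/3))
      = 8*a^2*(sin φ - sin (φ+2*π/3)) / Real.sqrt (sq2 a φ) := by
    rw [sin_tau ha1 ha2, sin_tau ha1 ha2, sq2_shift]
    linear_combination (1 / Real.sqrt (sq2 a φ)) * key2
  rw [hxd, hyd]
  have hch : (cos φ - cos (φ+2*π/3))^2 + (sin φ - sin (φ+2*π/3))^2 = 3 := by
    rw [cos_shift, sin_shift]; exact chord _ _ _ (hCSφ φ) ht3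
  rw [div_pow, div_pow, ← add_div, hs2]
  congr 1
  linear_combination (64*a^4 / sq2 a φ)*hch

lemma vtx_mem (ha1 : 1 < a) (φ : ℝ) : vtx a φ ∈ ellipse a := by
  have ha0 : a ≠ 0 := by intro h; rw [h] at ha1; linarith
  show (vtx a φ 0 / a)^2 + (vtx a φ 1)^2 = 1
  show ((a * cos (tau a φ)) / a)^2 + (sin (tau a φ))^2 = 1
  rw [mul_div_cancel_left₀ _ ha0]
  exact hCSφ _

/-! ### Properties of the triangle family -/

lemma vtx_periodic (n : ℤ) (φ : ℝ) : vtx a (φ + n*(2*π)) = vtx a φ := by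
  rw [vtx, vtx, tau_periodic]
  rw [Real.cos_add_int_mul_two_pi, Real.sin_add_int_mul_two_pi]

lemma vtx_2pi (φ : ℝ) : vtx a (φ + 2*π) = vtx a φ := by
  have := vtx_periodic (a := a) 1 φ
  rw [show φ + (1:ℤ)*(2*π) = φ + 2*π by push_cast; ring] at this
  exact this

lemma Tset_shift (φ : ℝ) : Tset a (φ + 2*π/3) = Tset a φ := by
  simp only [Tset]
  rw [show φ+2*π/3+2*π/3 = φ+4*π/3 by ring, show φ+2*π/3+4*π/3 = φ+2*π by ring, vtx_2pi]
  ext w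
  simp only [Set.mem_insert_iff, Set.mem_singleton_iff]
  tauto

lemma Tset_shift2 (φ : ℝ) : Tset a (φ + 4*π/3) = Tset a φ := by
  rw [show φ + 4*π/3 = φ + 2*π/3 + 2*π/3 by ring, Tset_shift, Tset_shift]

lemma Tset_periodic (n : ℤ) (φ : ℝ) : Tset a (φ + n*(2*π)) = Tset a φ := by
  simp only [Tset]
  rw [show φ + n*(2*π) + 2*π/3 = φ + 2*π/3 + n*(2*π) by ring,
    show φ + n*(2*π) + 4*π/3 = φ + 4*π/3 + n*(2*π) by ring,
    vtx_periodic, vtx_periodic, vtx_periodic]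

lemma vtx_inj (ha1 : 1 < a) (ha2 : a^2 ≤ 2) {χ χ' : ℝ} (hv : vtx a χ = vtx a χ') :
    ∃ n : ℤ, χ' = χ + n*(2*π) := by
  have ha0 : a ≠ 0 := by intro h; rw [h] at ha1; linarith
  have h0 : a * cos (tau a χ) = a * cos (tau a χ') := by
    have := congrArg (· 0) hv; exact this
  have h1 : sin (tau a χ) = sin (tau a χ') := by
    have := congrArg (· 1) hv; exact this
  have hc : cos (tau a χ) = cos (tau a χ') := mul_left_cancel₀ ha0 h0
  have hone : cos (tau a χ - tau a χ') = 1 := by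
    rw [Real.cos_sub, hc, h1]
    linear_combination hCSφ (tau a χ')
  obtain ⟨n, hn⟩ := (Real.cos_eq_one_iff _).1 hone
  have : tau a χ = tau a (χ' + n*(2*π)) := by
    rw [tau_periodic]; linarith
  have hinj := (tau_strictMono ha1 ha2).injective this
  exact ⟨-n, by push_cast; linarith⟩

lemma Tset_eq_of_vtx_eq (ha1 : 1 < a) (ha2 : a^2 ≤ 2) {χ χ' : ℝ}
    (hv : vtx a χ = vtx a χ') : Tset a χ = Tset a χ' := by
  obtain ⟨n, hn⟩ := vtx_inj ha1 ha2 hv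
  rw [hn, Tset_periodic]

lemma sq2_shift2 (a φ : ℝ) : sq2 a (φ + 4*π/3) = sq2 a φ := by
  rw [show φ + 4*π/3 = φ + 2*π/3 + 2*π/3 by ring, sq2_shift, sq2_shift]

lemma Tset_isTri (ha1 : 1 < a) (ha2 : a^2 ≤ 2) (φ : ℝ) :
    IsInscribedEqTri a (Tset a φ) := by
  have ha0 : (0:ℝ) < a := by linarith
  have hrpos : 0 < Real.sqrt (192*a^4 / sq2 a φ) :=
    Real.sqrt_pos.2 (div_pos (by positivity) (sq2_pos ha1 ha2 φ))
  have d1 : dist (vtx a φ) (vtx a (φ + 2*π/3)) = Real.sqrt (192*a^4 / sq2 a φ) :=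
    vtx_dist ha1 ha2 φ
  have d2 : dist (vtx a (φ + 2*π/3)) (vtx a (φ + 4*π/3)) = Real.sqrt (192*a^4 / sq2 a φ) := by
    have := vtx_dist ha1 ha2 (φ + 2*π/3)
    rw [show φ+2*π/3+2*π/3 = φ+4*π/3 by ring, sq2_shift] at this
    exact this
  have d3 : dist (vtx a φ) (vtx a (φ + 4*π/3)) = Real.sqrt (192*a^4 / sq2 a φ) := by
    have := vtx_dist ha1 ha2 (φ + 4*π/3)
    rw [show φ+4*π/3+2*π/3 = φ+2*π by ring, vtx_2pi, sq2_shift2, dist_comm] at this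
    exact this
  refine ⟨?_, vtx a φ, vtx a (φ + 2*π/3), vtx a (φ + 4*π/3), ?_, ?_, ?_, rfl, ?_, ?_⟩
  · rintro w hw
    rcases hw with h | h | h
    · rw [h]; exact vtx_mem ha1 φ
    · rw [h]; exact vtx_mem ha1 _
    · rw [Set.mem_singleton_iff] at h; rw [h]; exact vtx_mem ha1 _
  · exact dist_pos.1 (by rw [d1]; exact hrpos)
  · exact dist_pos.1 (by rw [d2]; exact hrpos)
  · exact dist_pos.1 (by rw [d3]; exact hrpos)
  · rw [d1, d2]
  · rw [d3, d2]

/-! ### Each point of the ellipse is a vertex -/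

lemma pt_eq (p : EuclideanSpace ℝ (Fin 2)) : p = pt2 (p 0) (p 1) := by
  ext i; fin_cases i <;> rfl

lemma exists_angle (ha1 : 1 < a) {p : EuclideanSpace ℝ (Fin 2)} (hp : p ∈ ellipse a) :
    ∃ t : ℝ, p = pt2 (a * cos t) (sin t) := by
  have ha0 : a ≠ 0 := by intro h; rw [h] at ha1; linarith
  have hp' : (p 0/a)^2 + (p 1)^2 = 1 := hp
  set z : ℂ := (↑(p 0 / a) : ℂ) + (↑(p 1) : ℂ) * Complex.I with hz
  have habs : ‖z‖ = 1 := by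
    rw [Complex.norm_def, hz, Complex.normSq_add_mul_I, hp', Real.sqrt_one]
  have hz0 : z ≠ 0 := by
    intro h; rw [h] at habs; simp at habs
  refine ⟨Complex.arg z, ?_⟩
  have hre : z.re = p 0 / a := by simp [hz]
  have him : z.im = p 1 := by simp [hz]
  have hcos : cos (Complex.arg z) = p 0 / a := by
    rw [Complex.cos_arg hz0, habs, hre]; simp
  have hsin : sin (Complex.arg z) = p 1 := by
    rw [Complex.sin_arg, habs, him]; simp
  rw [hcos, hsin, mul_div_cancel₀ _ ha0]
  exact pt_eq p

/-! ### Structure of equilateral triangles in the plane -/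

lemma solve_system (a C S t c0 c1 ρ : ℝ) (hCS : C^2 + S^2 = 1) (ht : t^2 = 3)
    (hρ : ρ ≠ 0) (ha0 : a ≠ 0)
    (E0 : (c0 + ρ*C)^2 + a^2*(c1 + ρ*S)^2 = a^2)
    (E1 : (c0 + ρ*(-(C+t*S)/2))^2 + a^2*(c1 + ρ*((t*C-S)/2))^2 = a^2)
    (E2 : (c0 + ρ*((t*S-C)/2))^2 + a^2*(c1 + ρ*(-(S+t*C)/2))^2 = a^2) :
    4*c0 = ρ*(a^2-1)*(C^3-3*C*S^2) ∧ 4*a^2*c1 = ρ*(a^2-1)*(3*C^2*S-S^3)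
      ∧ ρ^2*(Dq a C S^2 + Nq a C S^2) = 64*a^4 := by
  have ht0 : t ≠ 0 := by intro h; rw [h] at ht; norm_num at ht
  have h1 : ρ * (4*(c0*C + a^2*c1*S)) = ρ * (ρ*(a^2-1)*(C^2-S^2)) := by
    linear_combination ((-2:ℝ)/3)*(E1 + E2 - 2*E0) + ((-1:ℝ)*ρ^2 + ((1:ℝ)/3)*t^2*ρ^2) * hCS + (((1:ℝ)/3)*ρ^2 + ((-1:ℝ)/3)*C^2*ρ^2 + ((1:ℝ)/3)*C^2*a^2*ρ^2) * ht
  have k1 := mul_left_cancel₀ hρ h1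
  have h2 : (t*ρ) * (2*(a^2*c1*C - c0*S)) = (t*ρ) * (ρ*(a^2-1)*(C*S)) := by
    linear_combination (E1 - E2)
  have k2 := mul_left_cancel₀ (mul_ne_zero ht0 hρ) h2
  have G1 : 4*c0 = ρ*(a^2-1)*(C^3-3*C*S^2) := by
    linear_combination C*k1 - 2*S*k2 - 4*c0*hCS
  have G2 : 4*a^2*c1 = ρ*(a^2-1)*(3*C^2*S-S^3) := by
    linear_combination S*k1 + 2*C*k2 - 4*a^2*c1*hCS
  refine ⟨G1, G2, ?_⟩
  have E0pp : a^4*(4*c0+4*ρ*C)^2 + a^2*(4*a^2*c1+4*a^2*ρ*S)^2 = 16*a^6 := by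
    linear_combination (16*a^4)*E0
  rw [G1, G2] at E0pp
  have ha2ne : (a^2 : ℝ) ≠ 0 := pow_ne_zero 2 ha0
  apply mul_left_cancel₀ ha2ne
  rw [Aprime a C S hCS]
  linear_combination 4*E0pp + ((-32:ℝ)*a^4*ρ^2 + (-32:ℝ)*a^6*ρ^2 + (-32:ℝ)*S^2*a^4*ρ^2 + (32:ℝ)*S^2*a^6*ρ^2 + (32:ℝ)*C^2*a^4*ρ^2 + (-32:ℝ)*C^2*a^6*ρ^2) * hCS

lemma tri_struct {x y z : EuclideanSpace ℝ (Fin 2)} (_hxy : x ≠ y) (hyz : y ≠ z)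
    (h1 : dist x y = dist y z) (h2 : dist x z = dist y z) :
    ∃ c0 c1 ρ α : ℝ, 0 < ρ ∧ x = pt2 (c0 + ρ*cos α) (c1 + ρ*sin α) ∧
      ((y = pt2 (c0 + ρ*cos (α+2*π/3)) (c1 + ρ*sin (α+2*π/3)) ∧
        z = pt2 (c0 + ρ*cos (α+4*π/3)) (c1 + ρ*sin (α+4*π/3))) ∨
       (z = pt2 (c0 + ρ*cos (α+2*π/3)) (c1 + ρ*sin (α+2*π/3)) ∧
        y = pt2 (c0 + ρ*cos (α+4*π/3)) (c1 + ρ*sin (α+4*π/3)))) := by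
  obtain ⟨x0, x1, hx⟩ : ∃ u v, x = pt2 u v := ⟨_, _, pt_eq x⟩
  obtain ⟨y0, y1, hy⟩ : ∃ u v, y = pt2 u v := ⟨_, _, pt_eq y⟩
  obtain ⟨z0, z1, hz⟩ : ∃ u v, z = pt2 u v := ⟨_, _, pt_eq z⟩
  obtain ⟨d, hd⟩ : ∃ d, dist y z = d := ⟨_, rfl⟩
  have e1 : (x0-y0)^2 + (x1-y1)^2 = d^2 := by
    rw [← dist_sq_pt2 x0 x1 y0 y1, ← hx, ← hy, h1, hd]
  have e2 : (x0-z0)^2 + (x1-z1)^2 = d^2 := by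
    rw [← dist_sq_pt2 x0 x1 z0 z1, ← hx, ← hz, h2, hd]
  have e3 : (y0-z0)^2 + (y1-z1)^2 = d^2 := by
    rw [← dist_sq_pt2 y0 y1 z0 z1, ← hy, ← hz, hd]
  have hd2 : 0 < d^2 := by
    have h := dist_pos.2 hyz; rw [hd] at h; positivity
  have hxc : (x0-(x0+y0+z0)/3)^2 + (x1-(x1+y1+z1)/3)^2 = d^2/3 := by
    linear_combination (2/9)*e1 + (2/9)*e2 - (1/9)*e3
  have hyc : (y0-(x0+y0+z0)/3)^2 + (y1-(x1+y1+z1)/3)^2 = d^2/3 := by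
    linear_combination (2/9)*e1 + (2/9)*e3 - (1/9)*e2
  have hzc : (z0-(x0+y0+z0)/3)^2 + (z1-(x1+y1+z1)/3)^2 = d^2/3 := by
    linear_combination (2/9)*e2 + (2/9)*e3 - (1/9)*e1
  obtain ⟨ρ, hρ, hρ2⟩ : ∃ ρ : ℝ, 0 < ρ ∧ ρ^2 = d^2/3 :=
    ⟨Real.sqrt (d^2/3), Real.sqrt_pos.2 (by positivity), Real.sq_sqrt (by positivity)⟩
  have hρ2ne : (ρ:ℝ)^2 ≠ 0 := by positivity
  have getangle : ∀ u v : ℝ, u^2 + v^2 = d^2/3 → ∃ θ, u = ρ * cos θ ∧ v = ρ * sin θ := by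
    intro u v huv
    have hsq : Real.sqrt (d^2/3) = ρ := by rw [← hρ2, Real.sqrt_sq hρ.le]
    have habs : ‖(u:ℂ) + (v:ℂ)*Complex.I‖ = ρ := by
      rw [Complex.norm_def, Complex.normSq_add_mul_I, huv, hsq]
    refine ⟨Complex.arg ((u:ℂ) + (v:ℂ)*Complex.I), ?_, ?_⟩
    · have h := Complex.norm_mul_cos_arg ((u:ℂ) + (v:ℂ)*Complex.I)
      rw [habs] at h
      rw [h]; simp
    · have h := Complex.norm_mul_sin_arg ((u:ℂ) + (v:ℂ)*Complex.I)
      rw [habs] at h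
      rw [h]; simp
  obtain ⟨α, hxα0, hxα1⟩ := getangle _ _ hxc
  obtain ⟨β, hyβ0, hyβ1⟩ := getangle _ _ hyc
  obtain ⟨γ, hzγ0, hzγ1⟩ := getangle _ _ hzc
  have hx0 : x0 = (x0+y0+z0)/3 + ρ*cos α := by linarith only [hxα0]
  have hx1 : x1 = (x1+y1+z1)/3 + ρ*sin α := by linarith only [hxα1]
  have hy0 : y0 = (x0+y0+z0)/3 + ρ*cos β := by linarith only [hyβ0]
  have hy1 : y1 = (x1+y1+z1)/3 + ρ*sin β := by linarith only [hyβ1]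
  have hz0 : z0 = (x0+y0+z0)/3 + ρ*cos γ := by linarith only [hzγ0]
  have hz1 : z1 = (x1+y1+z1)/3 + ρ*sin γ := by linarith only [hzγ1]
  -- cosine rules
  have uβ : cos α * cos β + sin α * sin β = -(1/2) := by
    apply mul_left_cancel₀ hρ2ne
    have e1' : (ρ*cos α - ρ*cos β)^2 + (ρ*sin α - ρ*sin β)^2 = d^2 := by
      linear_combination e1 - ((x0-y0) + (ρ*cos α - ρ*cos β))*(hx0 - hy0)
        - ((x1-y1) + (ρ*sin α - ρ*sin β))*(hx1 - hy1)
    calc ρ^2 * (cos α * cos β + sin α * sin β)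
        = ρ^2*((cos α^2+sin α^2) + (cos β^2+sin β^2))/2
          - ((ρ*cos α - ρ*cos β)^2 + (ρ*sin α - ρ*sin β)^2)/2 := by ring
      _ = ρ^2 * (-(1/2)) := by rw [hCSφ, hCSφ, e1', hρ2]; ring
  have uγ : cos α * cos γ + sin α * sin γ = -(1/2) := by
    apply mul_left_cancel₀ hρ2ne
    have e2' : (ρ*cos α - ρ*cos γ)^2 + (ρ*sin α - ρ*sin γ)^2 = d^2 := by
      linear_combination e2 - ((x0-z0) + (ρ*cos α - ρ*cos γ))*(hx0 - hz0)
        - ((x1-z1) + (ρ*sin α - ρ*sin γ))*(hx1 - hz1)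
    calc ρ^2 * (cos α * cos γ + sin α * sin γ)
        = ρ^2*((cos α^2+sin α^2) + (cos γ^2+sin γ^2))/2
          - ((ρ*cos α - ρ*cos γ)^2 + (ρ*sin α - ρ*sin γ)^2)/2 := by ring
      _ = ρ^2 * (-(1/2)) := by rw [hCSφ, hCSφ, e2', hρ2]; ring
  -- sines of differences
  have wβsq : (sin α * cos β - cos α * sin β)^2 = 3/4 := by
    have k : (sin α * cos β - cos α * sin β)^2 + (cos α * cos β + sin α * sin β)^2 = 1 := by
      linear_combination (cos β^2 + sin β^2)*(hCSφ α) + hCSφ β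
    rw [uβ] at k; norm_num at k; linarith only [k]
  have wγsq : (sin α * cos γ - cos α * sin γ)^2 = 3/4 := by
    have k : (sin α * cos γ - cos α * sin γ)^2 + (cos α * cos γ + sin α * sin γ)^2 = 1 := by
      linear_combination (cos γ^2 + sin γ^2)*(hCSφ α) + hCSφ γ
    rw [uγ] at k; norm_num at k; linarith only [k]
  have wβcases : sin α * cos β - cos α * sin β = Real.sqrt 3/2
      ∨ sin α * cos β - cos α * sin β = -(Real.sqrt 3/2) := by
    have hfac : (sin α * cos β - cos α * sin β - Real.sqrt 3/2)
        * (sin α * cos β - cos α * sin β + Real.sqrt 3/2) = 0 := by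
      linear_combination wβsq - (1/4)*ht3
    rcases mul_eq_zero.1 hfac with h | h
    · left; linarith only [h]
    · right; linarith only [h]
  have wγcases : sin α * cos γ - cos α * sin γ = Real.sqrt 3/2
      ∨ sin α * cos γ - cos α * sin γ = -(Real.sqrt 3/2) := by
    have hfac : (sin α * cos γ - cos α * sin γ - Real.sqrt 3/2)
        * (sin α * cos γ - cos α * sin γ + Real.sqrt 3/2) = 0 := by
      linear_combination wγsq - (1/4)*ht3
    rcases mul_eq_zero.1 hfac with h | h
    · left; linarith only [h]
    · right; linarith only [h]
  have cosval : ∀ δ w : ℝ, cos α * cos δ + sin α * sin δ = -(1/2) →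
      sin α * cos δ - cos α * sin δ = w →
      cos δ = -(cos α)/2 + sin α * w ∧ sin δ = -(sin α)/2 - cos α * w := by
    intro δ w hu hw
    constructor
    · calc cos δ = cos δ * (cos α^2 + sin α^2) := by rw [hCSφ]; ring
        _ = cos α * (cos α * cos δ + sin α * sin δ)
            + sin α * (sin α * cos δ - cos α * sin δ) := by ring
        _ = -(cos α)/2 + sin α * w := by rw [hu, hw]; ring
    · calc sin δ = sin δ * (cos α^2 + sin α^2) := by rw [hCSφ]; ring
        _ = sin α * (cos α * cos δ + sin α * sin δ)
            - cos α * (sin α * cos δ - cos α * sin δ) := by ring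
        _ = -(sin α)/2 - cos α * w := by rw [hu, hw]; ring
  have hdiff : ¬ (sin α * cos β - cos α * sin β = sin α * cos γ - cos α * sin γ) := by
    intro hsame
    apply hyz
    obtain ⟨hcβ, hsβ⟩ := cosval β _ uβ rfl
    obtain ⟨hcγ, hsγ⟩ := cosval γ _ uγ rfl
    rw [hsame] at hcβ hsβ
    have hcc : ρ * cos β = ρ * cos γ := by rw [hcβ, ← hcγ]
    have hss : ρ * sin β = ρ * sin γ := by rw [hsβ, ← hsγ]
    have h0 : y0 = z0 := by linarith only [hy0, hz0, hcc]
    have h1' : y1 = z1 := by linarith only [hy1, hz1, hss]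
    rw [hy, hz, h0, h1']
  have mkpt : ∀ δ w : ℝ, cos α * cos δ + sin α * sin δ = -(1/2) →
      sin α * cos δ - cos α * sin δ = w →
      (w = Real.sqrt 3/2 → pt2 ((x0+y0+z0)/3 + ρ*cos δ) ((x1+y1+z1)/3 + ρ*sin δ)
          = pt2 ((x0+y0+z0)/3 + ρ*cos (α+4*π/3)) ((x1+y1+z1)/3 + ρ*sin (α+4*π/3)))
      ∧ (w = -(Real.sqrt 3/2) → pt2 ((x0+y0+z0)/3 + ρ*cos δ) ((x1+y1+z1)/3 + ρ*sin δ)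
          = pt2 ((x0+y0+z0)/3 + ρ*cos (α+2*π/3)) ((x1+y1+z1)/3 + ρ*sin (α+2*π/3))) := by
    intro δ w hu hw
    obtain ⟨hcδ, hsδ⟩ := cosval δ w hu hw
    constructor
    · intro hwv
      rw [hcδ, hsδ, hwv, cos_shift2, sin_shift2]
      ring_nf
    · intro hwv
      rw [hcδ, hsδ, hwv, cos_shift, sin_shift]
      ring_nf
  refine ⟨(x0+y0+z0)/3, (x1+y1+z1)/3, ρ, α, hρ, hx.trans (pt2_congr hx0 hx1), ?_⟩
  obtain ⟨mkβ1, mkβ2⟩ := mkpt β _ uβ rfl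
  obtain ⟨mkγ1, mkγ2⟩ := mkpt γ _ uγ rfl
  rcases wβcases with hwβ | hwβ <;> rcases wγcases with hwγ | hwγ
  · exact absurd (hwβ.trans hwγ.symm) hdiff
  · right
    constructor
    · exact (hz.trans (pt2_congr hz0 hz1)).trans (mkγ2 hwγ)
    · exact (hy.trans (pt2_congr hy0 hy1)).trans (mkβ1 hwβ)
  · left
    constructor
    · exact (hy.trans (pt2_congr hy0 hy1)).trans (mkβ2 hwβ)
    · exact (hz.trans (pt2_congr hz0 hz1)).trans (mkγ1 hwγ)
  · exact absurd (hwβ.trans hwγ.symm) hdiff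

/-! ### Identification of triangle vertices with the canonical family -/

lemma c3_shift2 (φ : ℝ) : cos (φ+4*π/3)^3 - 3*cos (φ+4*π/3)*sin (φ+4*π/3)^2
    = cos φ^3 - 3*cos φ*sin φ^2 := by
  rw [show φ + 4*π/3 = φ + 2*π/3 + 2*π/3 by ring, c3_shift, c3_shift]
lemma s3_shift2 (φ : ℝ) : 3*cos (φ+4*π/3)^2*sin (φ+4*π/3) - sin (φ+4*π/3)^3
    = 3*cos φ^2*sin φ - sin φ^3 := by
  rw [show φ + 4*π/3 = φ + 2*π/3 + 2*π/3 by ring, s3_shift, s3_shift]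

lemma vertex_eq (ha1 : 1 < a) (ha2 : a^2 ≤ 2) (c0 c1 ρ α θ : ℝ) (hρ : 0 < ρ)
    (G1 : 4*c0 = ρ*(a^2-1)*(cos α^3 - 3*cos α*sin α^2))
    (G2 : 4*a^2*c1 = ρ*(a^2-1)*(3*cos α^2*sin α - sin α^3))
    (G3 : ρ^2 * sq2 a α = 64*a^4)
    (hc3 : cos θ^3 - 3*cos θ*sin θ^2 = cos α^3 - 3*cos α*sin α^2)
    (hs3 : 3*cos θ^2*sin θ - sin θ^3 = 3*cos α^2*sin α - sin α^3)
    (hsq : sq2 a θ = sq2 a α) :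
    pt2 (c0 + ρ*cos θ) (c1 + ρ*sin θ) = vtx a θ := by
  have ha0 : (0:ℝ) < a := lt_trans one_pos ha1
  have hs := sqrt_sq2_pos ha1 ha2 θ
  have hsne := hs.ne'
  have hsval : Real.sqrt (sq2 a θ) = Real.sqrt (sq2 a α) := by rw [hsq]
  have hρs : ρ * Real.sqrt (sq2 a α) = 8*a^2 := by
    have h1 : ρ * Real.sqrt (sq2 a α) = Real.sqrt (ρ^2 * sq2 a α) := by
      rw [Real.sqrt_mul (sq_nonneg ρ), Real.sqrt_sq hρ.le]
    rw [h1, G3, show (64:ℝ)*a^4 = (8*a^2)^2 by ring, Real.sqrt_sq (by positivity)]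
  have keyx : (a * cos (tau a θ)) * Real.sqrt (sq2 a θ)
      = 2*a^2*(a^2-1)*(cos α^3 - 3*cos α*sin α^2) + 8*a^2*cos θ := by
    rw [cos_tau ha1 ha2 θ, mul_assoc, div_mul_cancel₀ _ hsne, DD, NN]
    linear_combination a*(B1 a (cos θ) (sin θ) (hCSφ θ)) + 2*a^2*(a^2-1)*hc3
  have keyc0x : (c0 + ρ*cos θ) * Real.sqrt (sq2 a θ)
      = 2*a^2*(a^2-1)*(cos α^3 - 3*cos α*sin α^2) + 8*a^2*cos θ := by
    rw [hsval]
    linear_combination (Real.sqrt (sq2 a α)/4)*G1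
      + ((a^2-1)*(cos α^3 - 3*cos α*sin α^2)/4)*hρs + cos θ*hρs
  have hx : a * cos (tau a θ) = c0 + ρ*cos θ :=
    mul_right_cancel₀ hsne (keyx.trans keyc0x.symm)
  have keyy : sin (tau a θ) * Real.sqrt (sq2 a θ)
      = 2*(a^2-1)*(3*cos α^2*sin α - sin α^3) + 8*a^2*sin θ := by
    rw [sin_tau ha1 ha2 θ, div_mul_cancel₀ _ hsne, DD, NN]
    linear_combination (B2 a (cos θ) (sin θ) (hCSφ θ)) + 2*(a^2-1)*hs3
  have keyc1y : (4*a^2) * ((c1 + ρ*sin θ) * Real.sqrt (sq2 a θ))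
      = (4*a^2) * (2*(a^2-1)*(3*cos α^2*sin α - sin α^3) + 8*a^2*sin θ) := by
    rw [hsval]
    linear_combination (Real.sqrt (sq2 a α))*G2
      + ((a^2-1)*(3*cos α^2*sin α - sin α^3))*hρs + 4*a^2*sin θ*hρs
  have hy : sin (tau a θ) = c1 + ρ*sin θ := by
    have h := mul_left_cancel₀ (show (4*a^2 : ℝ) ≠ 0 by positivity) keyc1y
    exact mul_right_cancel₀ hsne (keyy.trans h.symm)
  rw [vtx, ← hx, ← hy]

lemma mem_to_eq (ha1 : 1 < a) {u v : ℝ} (h : pt2 u v ∈ ellipse a) :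
    u^2 + a^2*v^2 = a^2 := by
  have ha0 : a ≠ 0 := by intro h'; rw [h'] at ha1; linarith
  have h' : (u/a)^2 + v^2 = 1 := h
  field_simp at h'
  linarith [h']

end EllipseAux

open EllipseAux Real in
/-- **Unique inscribed equilateral triangle** (Adamaszek–Adams–Reddy, Lemma 6.8).
Let `Y` be an ellipse of small eccentricity (`1 < a ≤ √2`) and `p ∈ Y`. Then there is a
unique equilateral triangle inscribed in `Y` having `p` as one of its vertices. -/
theorem ellipse_unique_inscribed_equilateral (a : ℝ) (ha1 : 1 < a) (ha2 : a ≤ Real.sqrt 2)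
    (p : EuclideanSpace ℝ (Fin 2)) (hp : p ∈ ellipse a) :
    ∃! T : Set (EuclideanSpace ℝ (Fin 2)), IsInscribedEqTri a T ∧ p ∈ T := by
  have ha0 : (0:ℝ) < a := lt_trans one_pos ha1
  have ha0ne : a ≠ 0 := ha0.ne'
  have ha2' : a^2 ≤ 2 := by
    have h := pow_le_pow_left₀ ha0.le ha2 2
    rwa [Real.sq_sqrt (by norm_num : (0:ℝ) ≤ 2)] at h
  obtain ⟨t, hpt⟩ := exists_angle ha1 hp
  obtain ⟨φ₀, hφ₀⟩ := tau_surj ha1 ha2' t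
  have hvp : vtx a φ₀ = p := by rw [hpt, vtx, hφ₀]
  refine ⟨Tset a φ₀, ⟨Tset_isTri ha1 ha2' φ₀, ?_⟩, ?_⟩
  · rw [← hvp]; exact Set.mem_insert _ _
  · rintro T' ⟨hT', hpT'⟩
    obtain ⟨hsub, x, y, z, hxy, hyz, hxz, hTeq, hd1, hd2⟩ := hT'
    obtain ⟨c0, c1, ρ, α, hρ, hxeq, hcase⟩ := tri_struct hxy hyz hd1 hd2
    have hxm : x ∈ ellipse a := hsub (by rw [hTeq]; left; rfl)
    have hym : y ∈ ellipse a := hsub (by rw [hTeq]; right; left; rfl)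
    have hzm : z ∈ ellipse a := hsub (by rw [hTeq]; right; right; rfl)
    -- uniform form of the three vertices
    have hm2and4 : (pt2 (c0 + ρ*cos (α+2*π/3)) (c1 + ρ*sin (α+2*π/3)) ∈ ellipse a)
        ∧ (pt2 (c0 + ρ*cos (α+4*π/3)) (c1 + ρ*sin (α+4*π/3)) ∈ ellipse a)
        ∧ T' = {pt2 (c0 + ρ*cos α) (c1 + ρ*sin α),
            pt2 (c0 + ρ*cos (α+2*π/3)) (c1 + ρ*sin (α+2*π/3)),
            pt2 (c0 + ρ*cos (α+4*π/3)) (c1 + ρ*sin (α+4*π/3))} := by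
      rcases hcase with ⟨hyeq, hzeq⟩ | ⟨hzeq, hyeq⟩
      · refine ⟨hyeq ▸ hym, hzeq ▸ hzm, ?_⟩
        rw [hTeq, hxeq, hyeq, hzeq]
      · refine ⟨hzeq ▸ hzm, hyeq ▸ hym, ?_⟩
        rw [hTeq, hxeq, hyeq, hzeq]
        ext w
        simp only [Set.mem_insert_iff, Set.mem_singleton_iff]
        tauto
    obtain ⟨hm2, hm4, hT''⟩ := hm2and4
    have hm0 : pt2 (c0 + ρ*cos α) (c1 + ρ*sin α) ∈ ellipse a := hxeq ▸ hxm
    -- the three quadratic equations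
    have E0 := mem_to_eq ha1 hm0
    have E1 : (c0 + ρ*(-(cos α + Real.sqrt 3*sin α)/2))^2
        + a^2*(c1 + ρ*((Real.sqrt 3*cos α - sin α)/2))^2 = a^2 := by
      have h := mem_to_eq ha1 hm2
      rw [cos_shift, sin_shift] at h
      exact h
    have E2 : (c0 + ρ*((Real.sqrt 3*sin α - cos α)/2))^2
        + a^2*(c1 + ρ*(-(sin α + Real.sqrt 3*cos α)/2))^2 = a^2 := by
      have h := mem_to_eq ha1 hm4
      rw [cos_shift2, sin_shift2] at h
      exact h
    obtain ⟨G1, G2, G3⟩ := solve_system a (cos α) (sin α) (Real.sqrt 3) c0 c1 ρ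
      (hCSφ α) ht3 hρ.ne' ha0ne E0 E1 E2
    have G3' : ρ^2 * sq2 a α = 64*a^4 := by
      rw [sq2, DD, NN]; linear_combination G3
    have hv0 := vertex_eq ha1 ha2' c0 c1 ρ α α hρ G1 G2 G3' rfl rfl rfl
    have hv2 := vertex_eq ha1 ha2' c0 c1 ρ α (α+2*π/3) hρ G1 G2 G3'
      (c3_shift α) (s3_shift α) (sq2_shift a α)
    have hv4 := vertex_eq ha1 ha2' c0 c1 ρ α (α+4*π/3) hρ G1 G2 G3'
      (c3_shift2 α) (s3_shift2 α) (sq2_shift2 a α)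
    have hT3 : T' = Tset a α := by
      rw [hT'', hv0, hv2, hv4]; rfl
    -- p is one of the vertices
    have hpmem : p ∈ Tset a α := hT3 ▸ hpT'
    rcases hpmem with h | h | h
    · rw [hT3]
      exact (Tset_eq_of_vtx_eq ha1 ha2' (h ▸ hvp.symm ▸ rfl : vtx a α = vtx a φ₀))
    · rw [hT3, ← Tset_shift (a := a) α]
      exact (Tset_eq_of_vtx_eq ha1 ha2' (show vtx a (α+2*π/3) = vtx a φ₀ by rw [← h, hvp]))
    · rw [hT3, ← Tset_shift2 (a := a) α]
      exact (Tset_eq_of_vtx_eq ha1 ha2' (show vtx a (α+4*π/3) = vtx a φ₀ by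
        rw [← (Set.mem_singleton_iff.1 h), hvp]))

end
end
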